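/- arXiv:1710.06070 — 3 statements merged into one kernel-verified Lean document; each statement's English description precedes it below -/
import Mathlib

section
/- Along the closed-loop dynamics ẇ = (J_cl − R_cl)∇H_cl(w) − (G_d d̄_a, 0, G_d d̄_a) with J_c1 − R_c1 = G_d, the Lyapunov candidate W(w) = H_cl(w) − d̄_a^T(w_c − w̄_c) − H_cl(w̄) satisfies Ẇ(w) ≤ −‖∇_{w_a}H_cl(w)‖²_{R_c2} − ‖∇_{w_a}H_cl(w) + K(w_c − w̄_c)‖²_{R_c1}, where w̄_c = K^{-1} d̄_a. -/
open Matrix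

def blockVec {m s : ℕ} (a : Fin m → ℝ) (b : Fin s → ℝ) (c : Fin m → ℝ) :
    (Fin m ⊕ (Fin s ⊕ Fin m)) → ℝ := Sum.elim a (Sum.elim b c)

noncomputable def Jcl {m s : ℕ} (Jc1 : Matrix (Fin m) (Fin m) ℝ)
    (Juu : Matrix (Fin s) (Fin s) ℝ) (Jau Rau : Matrix (Fin m) (Fin s) ℝ) :
    Matrix (Fin m ⊕ (Fin s ⊕ Fin m)) (Fin m ⊕ (Fin s ⊕ Fin m)) ℝ :=
  fromBlocks Jc1 (fromCols (Jau + Rau) Jc1)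
    (fromRows (-(Jau + Rau)ᵀ) Jc1) (fromBlocks Juu 0 0 Jc1)

noncomputable def Rcl {m s : ℕ} (Rc1 Rc2 : Matrix (Fin m) (Fin m) ℝ)
    (Ruu : Matrix (Fin s) (Fin s) ℝ) :
    Matrix (Fin m ⊕ (Fin s ⊕ Fin m)) (Fin m ⊕ (Fin s ⊕ Fin m)) ℝ :=
  fromBlocks (Rc1 + Rc2) (fromCols 0 Rc1) (fromRows 0 Rc1) (fromBlocks Ruu 0 0 Rc1)

/-- along the closed-loop dynamics, the Lyapunov candidate satisfies
`Ẇ ≤ −‖∇_{w_a}H_cl‖²_{R_c2} − ‖∇_{w_a}H_cl + K(w_c − w̄_c)‖²_{R_c1}`.  Here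
`a = ∇_{w_a}H_cl(w)`, `b = ∇_{w_u}H_cl(w)` and `K w_c` are the blocks of
`∇H_cl(w)`, and `∇W = ∇H_cl − (0,0,d̄_a)`, `w̄_c = K⁻¹ d̄_a`. -/
theorem stmt9 {m s : ℕ} (Jc1 Rc1 Rc2 K : Matrix (Fin m) (Fin m) ℝ)
    (Juu Ruu : Matrix (Fin s) (Fin s) ℝ) (Jau Rau : Matrix (Fin m) (Fin s) ℝ)
    (hJc1 : Jc1ᵀ = -Jc1) (hRc1 : Rc1.PosDef) (hRc2 : Rc2.PosSemidef)
    (hJuu : Juuᵀ = -Juu) (hRuu : Ruu.PosSemidef) (hK : K.PosDef)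
    (Gd : Matrix (Fin m) (Fin m) ℝ) (hGd : Gd = Jc1 - Rc1) (da : Fin m → ℝ) :
    ∀ (a : Fin m → ℝ) (b : Fin s → ℝ) (wc : Fin m → ℝ),
      blockVec a b (K.mulVec wc - da) ⬝ᵥ
        ((Jcl Jc1 Juu Jau Rau - Rcl Rc1 Rc2 Ruu).mulVec (blockVec a b (K.mulVec wc))
          - blockVec (Gd.mulVec da) 0 (Gd.mulVec da)) ≤
      -(a ⬝ᵥ Rc2.mulVec a)
        - ((a + K.mulVec (wc - K⁻¹.mulVec da)) ⬝ᵥ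
            Rc1.mulVec (a + K.mulVec (wc - K⁻¹.mulVec da))) := by

  intro a b wc
  have hKinv : K.mulVec (K⁻¹.mulVec da) = da := by
    rw [Matrix.mulVec_mulVec, Matrix.mul_nonsing_inv _ (isUnit_iff_ne_zero.mpr hK.det_pos.ne'),
      Matrix.one_mulVec]
  have hv : a + K.mulVec (wc - K⁻¹.mulVec da) = a + (K.mulVec wc - da) := by
    rw [Matrix.mulVec_sub, hKinv]
  rw [hv]
  subst hGd
  set c := K.mulVec wc with hc
  have hsym : Rc1ᵀ = Rc1 := by simpa using hRc1.1.eq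
  have skew1 : ∀ x : Fin m → ℝ, x ⬝ᵥ Jc1.mulVec x = 0 := by
    intro x
    have h := Matrix.dotProduct_mulVec x Jc1 x
    rw [← Matrix.mulVec_transpose, hJc1, Matrix.neg_mulVec, neg_dotProduct] at h
    have h2 := dotProduct_comm x (Jc1 *ᵥ x)
    linarith
  have skew2 : b ⬝ᵥ Juu.mulVec b = 0 := by
    have h := Matrix.dotProduct_mulVec b Juu b
    rw [← Matrix.mulVec_transpose, hJuu, Matrix.neg_mulVec, neg_dotProduct] at h
    have h2 := dotProduct_comm b (Juu *ᵥ b)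
    linarith
  have hcancel : a ⬝ᵥ Jau *ᵥ b + a ⬝ᵥ Rau *ᵥ b = b ⬝ᵥ (Jau + Rau)ᵀ *ᵥ a := by
    have h : a ⬝ᵥ (Jau + Rau) *ᵥ b = b ⬝ᵥ (Jau + Rau)ᵀ *ᵥ a := by
      rw [Matrix.dotProduct_mulVec, ← Matrix.mulVec_transpose, dotProduct_comm]
    simpa [Matrix.add_mulVec, dotProduct_add] using h
  have hruu : 0 ≤ b ⬝ᵥ Ruu.mulVec b := by simpa using hRuu.dotProduct_mulVec_nonneg b
  simp only [Jcl, Rcl, blockVec, Matrix.sub_mulVec, Matrix.fromBlocks_mulVec,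
    Matrix.fromCols_mulVec_sumElim, Matrix.fromRows_mulVec, dotProduct_sub,
    sumElim_dotProduct_sumElim, Matrix.add_mulVec, Matrix.neg_mulVec,
    dotProduct_add, dotProduct_neg, dotProduct_zero,
    sub_dotProduct, add_dotProduct, neg_dotProduct,
    Matrix.mulVec_add, Matrix.mulVec_sub, Matrix.zero_mulVec, zero_dotProduct,
    Sum.elim_comp_inl, Sum.elim_comp_inr, Sum.elim_inl, Sum.elim_inr]
  have e1 := skew1 (a + (c - da))
  simp only [Matrix.mulVec_add, Matrix.mulVec_sub, dotProduct_add,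
    dotProduct_sub, add_dotProduct, sub_dotProduct] at e1
  have c1 : c ⬝ᵥ Rc1.mulVec a = a ⬝ᵥ Rc1.mulVec c := by
    rw [Matrix.dotProduct_mulVec, ← Matrix.mulVec_transpose, hsym, dotProduct_comm]
  have c2 : da ⬝ᵥ Rc1.mulVec a = a ⬝ᵥ Rc1.mulVec da := by
    rw [Matrix.dotProduct_mulVec, ← Matrix.mulVec_transpose, hsym, dotProduct_comm]
  have c3 : da ⬝ᵥ Rc1.mulVec c = c ⬝ᵥ Rc1.mulVec da := by
    rw [Matrix.dotProduct_mulVec, ← Matrix.mulVec_transpose, hsym, dotProduct_comm]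
  linarith [hruu, e1, skew1 a, skew1 c, skew1 da, hcancel, skew2]
end

section
/- Under the unmatched-disturbance structural assumption, the vector field ẇ = (J_cl − R_cl)∇H_cl(w) − (0, (J_au+R_au)^T d̄_u, 0) equals (J_cl − R_cl)∇𝐇_cl(w) − ((J_c1−R_c1) d̄_u, 0, (J_c1−R_c1) d̄_u), where 𝐇_cl(w) = H_cl(w) + w_a^T d̄_u, provided R_c2 = 0. -/
open Matrix

/-- `R_cl` with `R_c2 = 0`. -/
noncomputable def Rcl0 {m s : ℕ} (Rc1 : Matrix (Fin m) (Fin m) ℝ)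
    (Ruu : Matrix (Fin s) (Fin s) ℝ) :
    Matrix (Fin m ⊕ (Fin s ⊕ Fin m)) (Fin m ⊕ (Fin s ⊕ Fin m)) ℝ :=
  fromBlocks Rc1 (fromCols 0 Rc1) (fromRows 0 Rc1) (fromBlocks Ruu 0 0 Rc1)

/-- with `R_c2 = 0`, the vector field
`(J_cl − R_cl)∇H_cl(w) − (0, (J_au+R_au)ᵀ d̄_u, 0)` equals
`(J_cl − R_cl)∇𝐇_cl(w) − ((J_c1−R_c1) d̄_u, 0, (J_c1−R_c1) d̄_u)`, where
`∇𝐇_cl = ∇H_cl + (d̄_u, 0, 0)`.  Here `a, b, K w_c` are the blocks of `∇H_cl`. -/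
theorem stmt12 {m s : ℕ} (Jc1 Rc1 K : Matrix (Fin m) (Fin m) ℝ)
    (Juu Ruu : Matrix (Fin s) (Fin s) ℝ) (Jau Rau : Matrix (Fin m) (Fin s) ℝ)
    (hJc1 : Jc1ᵀ = -Jc1) (hRc1 : Rc1ᵀ = Rc1) (hJuu : Juuᵀ = -Juu)
    (hRuu : Ruuᵀ = Ruu) (du : Fin m → ℝ) :
    ∀ (a : Fin m → ℝ) (b : Fin s → ℝ) (wc : Fin m → ℝ),
      (Jcl Jc1 Juu Jau Rau - Rcl0 Rc1 Ruu).mulVec (blockVec a b (K.mulVec wc))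
          - blockVec 0 ((Jau + Rau)ᵀ.mulVec du) 0 =
        (Jcl Jc1 Juu Jau Rau - Rcl0 Rc1 Ruu).mulVec
            (blockVec (a + du) b (K.mulVec wc))
          - blockVec ((Jc1 - Rc1).mulVec du) 0 ((Jc1 - Rc1).mulVec du) := by
  intro a b wc
  funext i
  rcases i with i | i | i <;>
    simp [Jcl, Rcl0, blockVec, mulVec, fromBlocks, fromCols, fromRows_apply_inl, fromRows_apply_inr,
      dotProduct, Sum.elim_inl, Sum.elim_inr, Matrix.sub_apply, Matrix.add_apply,
      Matrix.transpose_apply, Finset.sum_add_distrib, mul_add, add_mul] <;> ring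
end

section
/- For the unmatched-disturbance closed loop with R_c2 = 0, the shifted Hamiltonian 𝐖(w) = 𝐇_cl(w) − d̄_u^T(w_c − w̄_c) − 𝐇_cl(w̄) satisfies along trajectories the bound 𝐖̇(w) ≤ −‖∇_{w_a}𝐇_cl(w) + K(w_c − w̄_c)‖²_{R_c1} ≤ 0 for all w, where w̄_c = K^{-1} d̄_u. -/
open Matrix

lemma skew_dot {n : ℕ} (J : Matrix (Fin n) (Fin n) ℝ) (hJ : Jᵀ = -J) (x : Fin n → ℝ) :
    x ⬝ᵥ J.mulVec x = 0 := by
  have h2 : x ᵥ* J = -(J.mulVec x) := by rw [← Matrix.mulVec_transpose, hJ, Matrix.neg_mulVec]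
  have h := Matrix.dotProduct_mulVec x J x
  rw [h2, neg_dotProduct, dotProduct_comm] at h
  rw [dotProduct_comm]
  linarith

/-- for the unmatched-disturbance closed loop with `R_c2 = 0`,
`𝐖̇(w) = ∇𝐖(w)ᵀ F(w) ≤ −‖∇_{w_a}𝐇_cl + K(w_c − w̄_c)‖²_{R_c1} ≤ 0`, where
`a, b, K w_c` are the blocks of `∇𝐇_cl(w)`, `∇𝐖 = ∇𝐇_cl − (0,0,d̄_u)` and
`w̄_c = K⁻¹ d̄_u`. -/
theorem stmt14 {m s : ℕ} (Jc1 Rc1 K : Matrix (Fin m) (Fin m) ℝ)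
    (Juu Ruu : Matrix (Fin s) (Fin s) ℝ) (Jau Rau : Matrix (Fin m) (Fin s) ℝ)
    (hJc1 : Jc1ᵀ = -Jc1) (hRc1 : Rc1.PosDef) (hJuu : Juuᵀ = -Juu)
    (hRuu : Ruu.PosSemidef) (hK : K.PosDef)
    (Gd : Matrix (Fin m) (Fin m) ℝ) (hGd : Gd = Jc1 - Rc1) (du : Fin m → ℝ) :
    ∀ (a : Fin m → ℝ) (b : Fin s → ℝ) (wc : Fin m → ℝ),
      blockVec a b (K.mulVec wc - du) ⬝ᵥ
          ((Jcl Jc1 Juu Jau Rau - Rcl0 Rc1 Ruu).mulVec (blockVec a b (K.mulVec wc))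
            - blockVec (Gd.mulVec du) 0 (Gd.mulVec du)) ≤
        -((a + K.mulVec (wc - K⁻¹.mulVec du)) ⬝ᵥ
            Rc1.mulVec (a + K.mulVec (wc - K⁻¹.mulVec du))) ∧
      -((a + K.mulVec (wc - K⁻¹.mulVec du)) ⬝ᵥ
          Rc1.mulVec (a + K.mulVec (wc - K⁻¹.mulVec du))) ≤ 0 := by
  intro a b wc
  have hdu : K.mulVec (K⁻¹.mulVec du) = du := by
    rw [Matrix.mulVec_mulVec, Matrix.mul_nonsing_inv K
      (isUnit_iff_ne_zero.mpr hK.det_pos.ne'), Matrix.one_mulVec]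
  set c := K.mulVec wc with hc
  have hv : a + K.mulVec (wc - K⁻¹.mulVec du) = a + (c - du) := by
    rw [Matrix.mulVec_sub, hdu]
  rw [hv]
  set v := a + (c - du) with hvdef
  set N := Jau + Rau with hN
  have hcross : a ⬝ᵥ N.mulVec b = b ⬝ᵥ Nᵀ.mulVec a := by
    rw [Matrix.dotProduct_mulVec, ← Matrix.mulVec_transpose, dotProduct_comm]
  have key : blockVec a b (c - du) ⬝ᵥ
          ((Jcl Jc1 Juu Jau Rau - Rcl0 Rc1 Ruu).mulVec (blockVec a b c)
            - blockVec (Gd.mulVec du) 0 (Gd.mulVec du))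
      = v ⬝ᵥ Jc1.mulVec v - v ⬝ᵥ Rc1.mulVec v + b ⬝ᵥ Juu.mulVec b - b ⬝ᵥ Ruu.mulVec b
        + (a ⬝ᵥ N.mulVec b - b ⬝ᵥ Nᵀ.mulVec a) := by
    simp only [blockVec, Jcl, Rcl0, ← hN, hGd, hvdef, Matrix.sub_mulVec, fromBlocks_mulVec,
      fromCols_mulVec_sumElim, fromRows_mulVec, Sum.elim_comp_inl, Sum.elim_comp_inr,
      Matrix.zero_mulVec, Matrix.neg_mulVec, Matrix.mulVec_add, Matrix.mulVec_sub,
      Matrix.add_mulVec, Sum.elim_add_add, sumElim_dotProduct_sumElim,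
      dotProduct_add, dotProduct_sub, add_dotProduct, sub_dotProduct,
      dotProduct_neg, neg_dotProduct, dotProduct_zero, zero_dotProduct,
      Pi.add_apply, add_zero, zero_add]
    ring
  have h1 : 0 ≤ b ⬝ᵥ Ruu.mulVec b := by
    have := hRuu.dotProduct_mulVec_nonneg b; simpa using this
  have h2 : 0 ≤ v ⬝ᵥ Rc1.mulVec v := by
    have := hRc1.posSemidef.dotProduct_mulVec_nonneg v; simpa using this
  constructor
  · rw [key, skew_dot Jc1 hJc1 v, skew_dot Juu hJuu b, hcross]
    linarith
  · linarith
end
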